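/- The SFT of a neutral product state is maximally entangled at every site: let n ≥ 2, let \vec k : Fin n → ZMod d satisfy |\vec k| = 0, and let ψ = F_s e_{\vec k}. For each site j ∈ Fin n, the single-site reduced density matrix ρ_j (the partial trace of |ψ⟩⟨ψ| over all sites other than j), given by ρ_j(a,b) = ∑_{\vec m : Fin n → ZMod d, m_j = a} ψ(\vec m) · conj(ψ(Function.update \vec m j b)), equals d⁻¹ times the d×d identity matrix. In particular the entanglement entropy of ψ at every single site equals ln d, the maximal value. -/

import Mathlib

/-- The string Fourier transform `F_s` on `n`-qudits: its `(ℓ, k)` entry equals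
`d^{(1-n)/2} · ζ^{|ℓ|²} · ∏_{j₁ < j₂} q^{-ℓ_{j₁} k_{j₂}}` if `|ℓ| = |k|`, and `0` otherwise. -/
noncomputable def SFT (d n : ℕ) (q ζ : ℂ) :
    Matrix (Fin n → ZMod d) (Fin n → ZMod d) ℂ :=
  Matrix.of fun l k =>
    if (∑ j, l j) = (∑ j, k j) then
      (Real.sqrt d : ℂ) ^ (1 - (n : ℤ)) * ζ ^ (∑ j, l j).val ^ 2 *
        ∏ p ∈ Finset.univ.filter (fun p : Fin n × Fin n => p.1 < p.2),
          q ^ (-(((l p.1).val * (k p.2).val : ℕ) : ℤ))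
    else 0

/-- The product basis vector `e_{\vec k}` of the `n`-qudit space. -/
noncomputable def ket (d n : ℕ) (k : Fin n → ZMod d) : (Fin n → ZMod d) → ℂ :=
  fun m => if m = k then 1 else 0

/-- The single-site reduced density matrix at site `j` of the state `ψ = F_s e_{\vec k}`:
`ρ_j(a,b) = ∑_{\vec m : m_j = a} ψ(\vec m) · conj(ψ(update \vec m j b))`. -/
noncomputable def rho (d n : ℕ) [NeZero d] (q ζ : ℂ) (k : Fin n → ZMod d) (j : Fin n) :
    Matrix (ZMod d) (ZMod d) ℂ :=
  Matrix.of fun a b =>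
    ∑ m ∈ Finset.univ.filter (fun m : Fin n → ZMod d => m j = a),
      (SFT d n q ζ).mulVec (ket d n k) m *
        (starRingEnd ℂ) ((SFT d n q ζ).mulVec (ket d n k) (Function.update m j b))

lemma card_fiber (d n : ℕ) [NeZero d] (hn : 2 ≤ n) (j : Fin n) (a : ZMod d) :
    (Finset.univ.filter fun m : Fin n → ZMod d => m j = a ∧ ∑ i, m i = 0).card
      = d ^ (n - 2) := by
  obtain ⟨j', hj'⟩ : ∃ j' : Fin n, j' ≠ j :=
    Fintype.exists_ne_of_one_lt_card (by simpa using lt_of_lt_of_le one_lt_two hn) j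
  have hsum_update : ∀ (m : Fin n → ZMod d) (c : ZMod d),
      ∑ i, Function.update m j' c i = c + (∑ i, m i - m j') := by
    intro m c
    rw [Finset.sum_update_of_mem (Finset.mem_univ j')]
    congr 1
    have h := Finset.sum_sdiff (f := m) (Finset.singleton_subset_iff.mpr (Finset.mem_univ j'))
    rw [Finset.sum_singleton] at h
    rw [eq_sub_iff_add_eq, h]
  have hcard : (Finset.univ.filter fun m : Fin n → ZMod d => m j = a ∧ ∑ i, m i = 0).card
      = (Finset.univ.filter fun m : Fin n → ZMod d => m j = a ∧ m j' = 0).card := by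
    apply Finset.card_nbij' (fun m => Function.update m j' 0)
      (fun m => Function.update m j' (-(∑ i, m i)))
    · intro m hm
      simp only [Finset.coe_filter, Finset.mem_coe, Set.mem_setOf_eq, Finset.mem_filter, Finset.mem_univ, true_and] at hm ⊢
      exact ⟨by rw [Function.update_of_ne hj'.symm]; exact hm.1, Function.update_self _ _ _⟩
    · intro m hm
      simp only [Finset.coe_filter, Finset.mem_coe, Set.mem_setOf_eq, Finset.mem_filter, Finset.mem_univ, true_and] at hm ⊢
      refine ⟨by rw [Function.update_of_ne hj'.symm]; exact hm.1, ?_⟩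
      rw [hsum_update, hm.2]
      ring
    · intro m hm
      simp only [Finset.coe_filter, Finset.mem_coe, Set.mem_setOf_eq, Finset.mem_filter, Finset.mem_univ, true_and] at hm
      beta_reduce
      rw [Function.update_idem, hsum_update, hm.2]
      have : -((0:ZMod d) + (0 - m j')) = m j' := by ring
      rw [this, Function.update_eq_self]
    · intro m hm
      simp only [Finset.coe_filter, Finset.mem_coe, Set.mem_setOf_eq, Finset.mem_filter, Finset.mem_univ, true_and] at hm
      beta_reduce
      rw [Function.update_idem, ← hm.2, Function.update_eq_self]
  rw [hcard]
  have hT : (Finset.univ.filter fun m : Fin n → ZMod d => m j = a ∧ m j' = 0)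
      = Fintype.piFinset (fun i => if i = j then {a} else if i = j' then ({0} : Finset (ZMod d)) else Finset.univ) := by
    ext m
    simp only [Finset.mem_filter, Finset.mem_univ, true_and, Fintype.mem_piFinset]
    constructor
    · rintro ⟨h1, h2⟩ i
      split_ifs with h h'
      · subst h; simp [h1]
      · subst h'; simp [h2]
      · simp
    · intro h
      have h1 := h j
      have h2 := h j'
      rw [if_pos rfl] at h1
      rw [if_neg hj', if_pos rfl] at h2
      simp only [Finset.mem_singleton] at h1 h2
      exact ⟨h1, h2⟩
  rw [hT, Fintype.card_piFinset]
  have : ∀ i : Fin n, (if i = j then ({a} : Finset (ZMod d)) else if i = j' then {0} else Finset.univ).card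
      = if i = j ∨ i = j' then 1 else d := by
    intro i
    split_ifs with h h1 h2 h3 <;> simp_all [ZMod.card]
  rw [Finset.prod_congr rfl (fun i _ => this i)]
  rw [Finset.prod_ite, Finset.prod_const, Finset.prod_const, one_pow, one_mul]
  congr 1
  rw [Finset.filter_not, Finset.card_sdiff_of_subset (Finset.filter_subset _ _), Finset.card_univ,
    Fintype.card_fin]
  congr 1
  have : (Finset.univ.filter fun i : Fin n => i = j ∨ i = j') = {j, j'} := by
    ext i; simp [or_comm]
  rw [this, Finset.card_pair (Ne.symm hj')]

/-- the SFT of a neutral product state is maximally entangled at every site: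
if `n ≥ 2` and `|\vec k| = 0`, then for each site `j` the single-site reduced density matrix
of `ψ = F_s e_{\vec k}` equals `d⁻¹` times the identity; in particular the entanglement
entropy of `ψ` at every single site equals `ln d`, the maximal value. -/
theorem stmt_14 (d n : ℕ) [NeZero d] (hn : 2 ≤ n) (q ζ : ℂ)
    (hq : q = Complex.exp (2 * Real.pi * Complex.I / d))
    (hζ2 : ζ ^ 2 = q) (hζd : ζ ^ d ^ 2 = 1)
    (k : Fin n → ZMod d) (hk : ∑ j, k j = 0) (j : Fin n) :
    rho d n q ζ k j = (d : ℂ)⁻¹ • (1 : Matrix (ZMod d) (ZMod d) ℂ) ∧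
    -∑ a : ZMod d, (rho d n q ζ k j a a).re * Real.log (rho d n q ζ k j a a).re
      = Real.log d := by
  have hd0 : (d : ℕ) ≠ 0 := NeZero.ne d
  have hd0' : (d : ℝ) ≠ 0 := Nat.cast_ne_zero.mpr hd0
  have hd0c : (d : ℂ) ≠ 0 := Nat.cast_ne_zero.mpr hd0
  -- |q| = 1
  have habsq : ‖q‖ = 1 := by
    rw [hq, Complex.norm_exp]
    have : (2 * ↑Real.pi * Complex.I / ↑d).re = 0 := by
      simp [Complex.div_re, Complex.mul_re, Complex.mul_im]
    rw [this, Real.exp_zero]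
  -- ψ(m) = SFT m k
  have hpsi : ∀ m : Fin n → ZMod d,
      (SFT d n q ζ).mulVec (ket d n k) m = SFT d n q ζ m k := by
    intro m
    simp only [Matrix.mulVec, dotProduct, ket, mul_ite, mul_one, mul_zero]
    rw [Finset.sum_ite_eq' Finset.univ k (fun x => SFT d n q ζ m x)]
    simp
  -- sum of update
  have hsum_update : ∀ (m : Fin n → ZMod d) (c : ZMod d),
      ∑ i, Function.update m j c i = c + (∑ i, m i - m j) := by
    intro m c
    rw [Finset.sum_update_of_mem (Finset.mem_univ j)]
    congr 1
    have h := Finset.sum_sdiff (f := m) (Finset.singleton_subset_iff.mpr (Finset.mem_univ j))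
    rw [Finset.sum_singleton] at h
    rw [eq_sub_iff_add_eq, h]
  have key : rho d n q ζ k j = (d : ℂ)⁻¹ • (1 : Matrix (ZMod d) (ZMod d) ℂ) := by
    ext a b
    rw [Matrix.smul_apply, Matrix.one_apply]
    show (∑ m ∈ Finset.univ.filter (fun m : Fin n → ZMod d => m j = a),
      (SFT d n q ζ).mulVec (ket d n k) m *
        (starRingEnd ℂ) ((SFT d n q ζ).mulVec (ket d n k) (Function.update m j b)))
      = (d:ℂ)⁻¹ • (if a = b then 1 else 0)
    by_cases hab : a = b
    · subst hab
      rw [if_pos rfl, smul_eq_mul, mul_one]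
      have hterm : ∀ m ∈ Finset.univ.filter (fun m : Fin n → ZMod d => m j = a),
          (SFT d n q ζ).mulVec (ket d n k) m *
            (starRingEnd ℂ) ((SFT d n q ζ).mulVec (ket d n k) (Function.update m j a))
          = if ∑ i, m i = 0 then ((d:ℂ) ^ (1 - (n:ℤ))) else 0 := by
        intro m hm
        rw [Finset.mem_filter] at hm
        have hup : Function.update m j a = m := by rw [← hm.2, Function.update_eq_self]
        rw [hup, hpsi]
        by_cases hs : ∑ i, m i = 0
        · rw [if_pos hs]
          have hcond : (∑ i, m i) = (∑ i, k i) := by rw [hs, hk]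
          rw [SFT]
          simp only [Matrix.of_apply, if_pos hcond]
          have hval : (∑ i, m i).val = 0 := by rw [hs, ZMod.val_zero]
          rw [hval]
          simp only [ne_eq, OfNat.ofNat_ne_zero, not_false_eq_true, zero_pow, pow_zero, mul_one]
          rw [map_mul, map_prod]
          have hc : (starRingEnd ℂ) ((Real.sqrt d : ℂ) ^ (1 - (n:ℤ)))
              = (Real.sqrt d : ℂ) ^ (1 - (n:ℤ)) := by
            rw [map_zpow₀, Complex.conj_ofReal]
          rw [hc]
          have hqf : ∀ p : Fin n × Fin n,
              (q ^ (-(((m p.1).val * (k p.2).val : ℕ) : ℤ))) *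
                (starRingEnd ℂ) (q ^ (-(((m p.1).val * (k p.2).val : ℕ) : ℤ))) = 1 := by
            intro p
            rw [Complex.mul_conj]
            rw [map_zpow₀ Complex.normSq, Complex.normSq_eq_norm_sq, habsq]
            norm_num
          calc (Real.sqrt d : ℂ) ^ (1 - (n:ℤ)) *
                (∏ p ∈ Finset.univ.filter (fun p : Fin n × Fin n => p.1 < p.2),
                  q ^ (-(((m p.1).val * (k p.2).val : ℕ) : ℤ))) *
              ((Real.sqrt d : ℂ) ^ (1 - (n:ℤ)) *
                ∏ p ∈ Finset.univ.filter (fun p : Fin n × Fin n => p.1 < p.2),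
                  (starRingEnd ℂ) (q ^ (-(((m p.1).val * (k p.2).val : ℕ) : ℤ))))
              = ((Real.sqrt d : ℂ) ^ (1 - (n:ℤ)) * (Real.sqrt d : ℂ) ^ (1 - (n:ℤ))) *
                ∏ p ∈ Finset.univ.filter (fun p : Fin n × Fin n => p.1 < p.2),
                  ((q ^ (-(((m p.1).val * (k p.2).val : ℕ) : ℤ))) *
                    (starRingEnd ℂ) (q ^ (-(((m p.1).val * (k p.2).val : ℕ) : ℤ)))) := by
                rw [Finset.prod_mul_distrib]; ring
            _ = (d:ℂ) ^ (1 - (n:ℤ)) := by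
                rw [Finset.prod_congr rfl (fun p _ => hqf p), Finset.prod_const_one, mul_one,
                  ← mul_zpow]
                congr 2
                rw [← Complex.ofReal_mul, Real.mul_self_sqrt (Nat.cast_nonneg d)]
                simp
        · rw [if_neg hs]
          have : SFT d n q ζ m k = 0 := by
            rw [SFT]
            simp only [Matrix.of_apply]
            rw [if_neg (by rw [hk]; exact hs)]
          rw [this, zero_mul]
      rw [Finset.sum_congr rfl hterm, ← Finset.sum_filter, Finset.filter_filter,
        Finset.sum_const, card_fiber d n hn j a, nsmul_eq_mul]
      push_cast
      rw [← zpow_natCast (d:ℂ) (n-2), ← zpow_add₀ hd0c]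
      have : ((n - 2 : ℕ) : ℤ) + (1 - (n:ℤ)) = -1 := by
        have : ((n - 2 : ℕ) : ℤ) = (n:ℤ) - 2 := by
          rw [Nat.cast_sub hn]; norm_num
        rw [this]; ring
      rw [this, zpow_neg_one]
    · rw [if_neg hab, smul_eq_mul, mul_zero]
      apply Finset.sum_eq_zero
      intro m hm
      rw [Finset.mem_filter] at hm
      rw [hpsi, hpsi]
      by_cases hs : ∑ i, m i = 0
      · have : SFT d n q ζ (Function.update m j b) k = 0 := by
          rw [SFT]
          simp only [Matrix.of_apply]
          rw [if_neg]
          rw [hsum_update, hs, hm.2, hk]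
          intro h
          apply hab
          have : b = a := by linear_combination h
          exact this.symm
        rw [this, map_zero, mul_zero]
      · have : SFT d n q ζ m k = 0 := by
          rw [SFT]
          simp only [Matrix.of_apply]
          rw [if_neg (by rw [hk]; exact hs)]
        rw [this, zero_mul]
  refine ⟨key, ?_⟩
  have hdiag : ∀ a : ZMod d, (rho d n q ζ k j a a).re = (d:ℝ)⁻¹ := by
    intro a
    rw [key]
    simp [Matrix.smul_apply, Matrix.one_apply]
  rw [Finset.sum_congr rfl (fun a _ => by rw [hdiag a])]
  rw [Finset.sum_const, Finset.card_univ, ZMod.card, nsmul_eq_mul, Real.log_inv]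
  field_simp
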